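/- arXiv:2004.14183 — 3 statements merged into one kernel-verified Lean document; each statement's English description precedes it below -/
import Mathlib

section
/- If T̂ is symmetric positive definite, then the dual functional J_S(Λ) = −log det(S⁻¹+Λ) + tr(T̂Λ) is coercive on Q_S: J_S(Λₙ) → +∞ along any sequence Λₙ ∈ Q_S with ‖Λₙ‖ → ∞. -/
open Filter
open Matrix


lemma psd_diag_nonneg {m : ℕ} {A : Matrix (Fin m) (Fin m) ℝ} (hA : A.PosSemidef) (i : Fin m) :
    0 ≤ A i i := by
  have h := hA.dotProduct_mulVec_nonneg (Pi.single i 1)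
  simpa [Matrix.mulVec_single, dotProduct, Pi.single_apply] using h

lemma psd_trace_nonneg {m : ℕ} {A : Matrix (Fin m) (Fin m) ℝ} (hA : A.PosSemidef) :
    0 ≤ A.trace := Finset.sum_nonneg fun i _ => psd_diag_nonneg hA i

open scoped MatrixOrder in
lemma psd_trace_mul_nonneg {m : ℕ} {P Q : Matrix (Fin m) (Fin m) ℝ}
    (hP : P.PosSemidef) (hQ : Q.PosSemidef) : 0 ≤ (P * Q).trace := by
  obtain ⟨B, hB⟩ := CStarAlgebra.nonneg_iff_eq_star_mul_self.mp hQ.nonneg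
  rw [hB, Matrix.star_eq_conjTranspose]
  have h : (P * (Bᴴ * B)).trace = (B * P * Bᴴ).trace := by
    rw [Matrix.trace_mul_comm P (Bᴴ*B), Matrix.trace_mul_cycle B P Bᴴ, mul_assoc]
  rw [h]
  exact psd_trace_nonneg (hP.mul_mul_conjTranspose_same B)

lemma trace_eq_sum_eigs {m : ℕ} {A : Matrix (Fin m) (Fin m) ℝ} (hA : A.IsHermitian) :
    A.trace = ∑ i, hA.eigenvalues i := by
  nth_rewrite 1 [hA.spectral_theorem]
  rw [Unitary.conjStarAlgAut_apply, Matrix.trace_mul_cycle, Matrix.mem_unitaryGroup_iff'.mp (Matrix.IsHermitian.eigenvectorUnitary hA).2, one_mul,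
    Matrix.trace_diagonal]
  simp

lemma psd_entry_sq {m : ℕ} {A : Matrix (Fin m) (Fin m) ℝ} (hA : A.PosSemidef) (i j : Fin m) :
    (A i j)^2 ≤ A i i * A j j := by
  by_cases hij : i = j
  · subst hij; rw [sq]
  · have hsym : A j i = A i j := by
      have := hA.1.apply j i
      simpa using this.symm
    have hent : ∀ k l, Pi.single k (1:ℝ) ⬝ᵥ A *ᵥ Pi.single l 1 = A k l := by
      intro k l
      simp [Matrix.mulVec_single, single_dotProduct]
    have key : ∀ x : ℝ, 0 ≤ A i i * (x * x) + (2 * A i j) * x + A j j := by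
      intro x
      let v : Fin m → ℝ := x • (Pi.single i 1 : Fin m → ℝ) + Pi.single j 1
      have h := hA.dotProduct_mulVec_nonneg v
      simp only [v] at h
      simp only [star_trivial, Matrix.mulVec_add, Matrix.mulVec_smul, dotProduct_add,
        add_dotProduct, smul_dotProduct, dotProduct_smul, hent, smul_eq_mul] at h
      rw [hsym] at h
      nlinarith [h]
    have hd := discrim_le_zero key
    rw [discrim] at hd
    nlinarith



lemma frob_le_trace {m : ℕ} {A : Matrix (Fin m) (Fin m) ℝ} (hA : A.PosSemidef) :
    Real.sqrt (∑ i, ∑ j, (A i j)^2) ≤ A.trace := by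
  have htr : A.trace = ∑ i, A i i := rfl
  have h2 : (0:ℝ) ≤ A.trace := by
    rw [htr]; exact Finset.sum_nonneg fun i _ => psd_diag_nonneg hA i
  have h1 : ∑ i, ∑ j, (A i j)^2 ≤ A.trace ^ 2 := by
    calc ∑ i, ∑ j, (A i j)^2 ≤ ∑ i, ∑ j, A i i * A j j :=
          Finset.sum_le_sum fun i _ => Finset.sum_le_sum fun j _ => psd_entry_sq hA i j
      _ = (∑ i, A i i) * (∑ j, A j j) := by rw [Finset.sum_mul]; simp [Finset.mul_sum]
      _ = A.trace ^ 2 := by rw [htr, sq]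
  calc Real.sqrt (∑ i, ∑ j, (A i j)^2) ≤ Real.sqrt (A.trace ^ 2) := Real.sqrt_le_sqrt h1
    _ = A.trace := by rw [Real.sqrt_sq h2]

lemma frob_add_le {m : ℕ} (A B : Matrix (Fin m) (Fin m) ℝ) :
    Real.sqrt (∑ i, ∑ j, ((A + B) i j)^2) ≤
      Real.sqrt (∑ i, ∑ j, (A i j)^2) + Real.sqrt (∑ i, ∑ j, (B i j)^2) := by
  have key : ∀ M : Matrix (Fin m) (Fin m) ℝ,
      Real.sqrt (∑ i, ∑ j, (M i j)^2) =
        ‖(WithLp.equiv 2 (Fin m × Fin m → ℝ)).symm (fun p => M p.1 p.2)‖ := by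
    intro M
    rw [EuclideanSpace.norm_eq]
    congr 1
    rw [Fintype.sum_prod_type]
    congr 1; ext i; congr 1; ext j
    simp [sq_abs, PiLp.toLp_apply]
  rw [key, key, key]
  have : (WithLp.equiv 2 (Fin m × Fin m → ℝ)).symm (fun p => (A + B) p.1 p.2) =
      (WithLp.equiv 2 (Fin m × Fin m → ℝ)).symm (fun p => A p.1 p.2) +
      (WithLp.equiv 2 (Fin m × Fin m → ℝ)).symm (fun p => B p.1 p.2) := rfl
  rw [this]
  exact norm_add_le _ _

lemma logdet_le {m : ℕ} {A : Matrix (Fin m) (Fin m) ℝ} (hA : A.PosDef) {t : ℝ} (ht : 0 < t) :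
    Real.log A.det ≤ t * A.trace + m * (-Real.log t - 1) := by
  have hdet : A.det = ∏ i, hA.1.eigenvalues i := by
    simpa using hA.1.det_eq_prod_eigenvalues
  rw [hdet, Real.log_prod (fun i _ => (hA.eigenvalues_pos i).ne'),
    trace_eq_sum_eigs hA.1, Finset.mul_sum]
  have hle : ∀ i : Fin m, Real.log (hA.1.eigenvalues i) ≤
      t * hA.1.eigenvalues i + (-Real.log t - 1) := by
    intro i
    have hpos := hA.eigenvalues_pos i
    have h1 : Real.log (t * hA.1.eigenvalues i) ≤ t * hA.1.eigenvalues i - 1 :=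
      Real.log_le_sub_one_of_pos (mul_pos ht hpos)
    rw [Real.log_mul ht.ne' hpos.ne'] at h1
    linarith
  calc ∑ i, Real.log (hA.1.eigenvalues i)
      ≤ ∑ i : Fin m, (t * hA.1.eigenvalues i + (-Real.log t - 1)) :=
        Finset.sum_le_sum fun i _ => hle i
    _ = ∑ i, t * hA.1.eigenvalues i + m * (-Real.log t - 1) := by
        rw [Finset.sum_add_distrib]; simp [mul_comm]; ring

/-- Coercivity of the dual functional `J_S(Λ) = -log det(S⁻¹+Λ) + tr(T̂ Λ)` on `Q_S`
when `T̂ ≻ 0`: it blows up along any sequence whose (Frobenius) norm diverges. -/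
theorem dual_functional_coercive {m : ℕ} (S That : Matrix (Fin m) (Fin m) ℝ)
    (hS : S.PosDef) (hThat : That.PosDef) (Λ : ℕ → Matrix (Fin m) (Fin m) ℝ)
    (hΛ : ∀ n, (Λ n).IsSymm ∧ (S⁻¹ + Λ n).PosDef)
    (hnorm : Tendsto (fun n => Real.sqrt (∑ i, ∑ j, (Λ n i j) ^ 2)) atTop atTop) :
    Tendsto (fun n => -Real.log (S⁻¹ + Λ n).det + Matrix.trace (That * Λ n))
      atTop atTop := by
  rcases Nat.eq_zero_or_pos m with hm | hm
  · exfalso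
    subst hm
    obtain ⟨n, hn⟩ := (hnorm.eventually (eventually_gt_atTop (0:ℝ))).exists
    simp at hn
  · haveI : Nonempty (Fin m) := ⟨⟨0, hm⟩⟩
    set eig := hThat.1.eigenvalues with heig
    set ε := Finset.univ.inf' Finset.univ_nonempty eig with hεdef
    have hεpos : 0 < ε := by
      rw [hεdef, Finset.lt_inf'_iff]
      exact fun i _ => hThat.eigenvalues_pos i
    have hεle : ∀ i, ε ≤ eig i := fun i => Finset.inf'_le _ (Finset.mem_univ i)
    have hshift : (That - ε • (1 : Matrix (Fin m) (Fin m) ℝ)).PosSemidef := by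
      set U : Matrix (Fin m) (Fin m) ℝ :=
        (Matrix.IsHermitian.eigenvectorUnitary hThat.1 : Matrix (Fin m) (Fin m) ℝ) with hUdef
      have hUU : U * star U = 1 :=
        Matrix.mem_unitaryGroup_iff.mp (Matrix.IsHermitian.eigenvectorUnitary hThat.1).2
      have hsp : That = U * Matrix.diagonal (RCLike.ofReal ∘ eig) * star U :=
        hThat.1.spectral_theorem
      have hD : Matrix.diagonal (fun i => eig i - ε) =
          Matrix.diagonal (RCLike.ofReal ∘ eig) - ε • (1 : Matrix (Fin m) (Fin m) ℝ) := by
        ext i j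
        rcases eq_or_ne i j with rfl | h
        · simp
        · simp [Matrix.diagonal_apply_ne _ h, Matrix.one_apply_ne h]
      have hkey : That - ε • (1 : Matrix (Fin m) (Fin m) ℝ) =
          U * Matrix.diagonal (fun i => eig i - ε) * star U := by
        rw [hD, Matrix.mul_sub, Matrix.sub_mul, ← hsp, Matrix.mul_smul, mul_one,
          Matrix.smul_mul, hUU]
      rw [hkey, Matrix.star_eq_conjTranspose]
      exact (Matrix.PosSemidef.diagonal
        (fun i => sub_nonneg.2 (hεle i))).mul_mul_conjTranspose_same U
    have htrace_ge : ∀ {A : Matrix (Fin m) (Fin m) ℝ}, A.PosSemidef →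
        ε * A.trace ≤ (That * A).trace := by
      intro A hA'
      have h0 := psd_trace_mul_nonneg hshift hA'
      rw [Matrix.sub_mul, Matrix.trace_sub, Matrix.smul_mul, one_mul, Matrix.trace_smul,
        smul_eq_mul] at h0
      linarith
    set c₀ := (That * S⁻¹).trace with hc₀
    set cS := Real.sqrt (∑ i, ∑ j, ((S⁻¹ : Matrix (Fin m) (Fin m) ℝ) i j)^2) with hcS
    set C := -Real.log (ε/2) - 1 with hC
    have hbound : ∀ n, (ε/2) * Real.sqrt (∑ i, ∑ j, (Λ n i j)^2) - ((ε/2) * cS + m * C + c₀) ≤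
        -Real.log (S⁻¹ + Λ n).det + (That * Λ n).trace := by
      intro n
      obtain ⟨hsymm, hpd⟩ := hΛ n
      set A := S⁻¹ + Λ n with hAdef
      have hpsd := hpd.posSemidef
      have h1 : Real.log A.det ≤ (ε/2) * A.trace + m * C := logdet_le hpd (half_pos hεpos)
      have h2 : ε * A.trace ≤ (That * A).trace := htrace_ge hpsd
      have h3 : (That * A).trace = c₀ + (That * Λ n).trace := by
        rw [hAdef, Matrix.mul_add, Matrix.trace_add]
      have h6 : Real.sqrt (∑ i, ∑ j, (Λ n i j)^2) ≤
          Real.sqrt (∑ i, ∑ j, (A i j)^2) +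
          Real.sqrt (∑ i, ∑ j, ((-(S⁻¹) : Matrix (Fin m) (Fin m) ℝ) i j)^2) := by
        have h := frob_add_le A (-(S⁻¹) : Matrix (Fin m) (Fin m) ℝ)
        have hEq : A + (-(S⁻¹) : Matrix (Fin m) (Fin m) ℝ) = Λ n := by
          rw [hAdef]; abel
        rwa [hEq] at h
      have h7 : Real.sqrt (∑ i, ∑ j, ((-(S⁻¹) : Matrix (Fin m) (Fin m) ℝ) i j)^2) = cS := by
        rw [hcS]; congr 1; simp [Matrix.neg_apply]
      have h5 : Real.sqrt (∑ i, ∑ j, (A i j)^2) ≤ A.trace := frob_le_trace hpsd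
      have h4 : Real.sqrt (∑ i, ∑ j, (Λ n i j)^2) ≤ cS + A.trace := by
        rw [h7] at h6; linarith
      have h8 := mul_le_mul_of_nonneg_left h4 (le_of_lt (half_pos hεpos))
      have h9 : (ε/2) * (cS + A.trace) = (ε/2)*cS + (ε/2)*A.trace := by ring
      linarith
    have hlim : Tendsto (fun n => (ε/2) * Real.sqrt (∑ i, ∑ j, (Λ n i j)^2) -
        ((ε/2) * cS + m * C + c₀)) atTop atTop := by
      simp only [sub_eq_add_neg]
      exact tendsto_atTop_add_const_right _ _ (Tendsto.const_mul_atTop (half_pos hεpos) hnorm)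
    exact tendsto_atTop_mono hbound hlim
end

section
/- Let S, T̂ be m×m symmetric positive definite matrices and Ω a symmetric support set containing the diagonal. Then the problem of minimizing 2D(T‖S) over positive definite symmetric T subject to P_Ω(T − T̂) = 0 admits at most one solution. -/
open Matrix Finset

lemma posDef_smul_aux {m : ℕ} {M : Matrix (Fin m) (Fin m) ℝ} (hM : M.PosDef)
    {c : ℝ} (hc : 0 < c) : (c • M).PosDef := by
  refine Matrix.PosDef.of_dotProduct_mulVec_pos ?_ fun x hx => ?_
  · unfold Matrix.IsHermitian
    rw [conjTranspose_smul, hM.1.eq]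
    simp
  · rw [Matrix.smul_mulVec, dotProduct_smul]
    exact mul_pos hc (hM.dotProduct_mulVec_pos hx)



lemma posDef_conj_aux {m : ℕ} {M N : Matrix (Fin m) (Fin m) ℝ}
    (hM : M.PosDef) (hN : IsUnit N) : (Nᴴ * M * N).PosDef := by
  refine Matrix.PosDef.of_dotProduct_mulVec_pos (Matrix.isHermitian_conjTranspose_mul_mul N hM.1) fun x hx => ?_
  have hNx : N *ᵥ x ≠ 0 := (Matrix.mulVec_injective_iff_isUnit.mpr hN).ne_iff' (by simp) |>.2 hx
  have key : star x ⬝ᵥ (Nᴴ * M * N) *ᵥ x = star (N *ᵥ x) ⬝ᵥ M *ᵥ (N *ᵥ x) := by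
    simp only [← Matrix.mulVec_mulVec, Matrix.dotProduct_mulVec, star_mulVec]
  rw [key]
  exact hM.dotProduct_mulVec_pos hNx

/-- Strict log-concavity of determinant at the midpoint. -/
lemma det_avg_sq_gt {m : ℕ} {A B : Matrix (Fin m) (Fin m) ℝ}
    (hA : A.PosDef) (hB : B.PosDef) (hne : A ≠ B) :
    A.det * B.det < (((1:ℝ)/2) • (A + B)).det ^ 2 := by
  classical
  open scoped MatrixOrder in
  set R := CFC.sqrt A with hRdef
  have hRps : R.PosSemidef := open scoped MatrixOrder in Matrix.nonneg_iff_posSemidef.mp (CFC.sqrt_nonneg A)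
  have hRR : R * R = A := open scoped MatrixOrder in CFC.sqrt_mul_sqrt_self A (Matrix.nonneg_iff_posSemidef.mpr hA.posSemidef)
  have hdA : A.det = R.det ^ 2 := by rw [← hRR, det_mul, sq]
  have hRdet : R.det ≠ 0 := by
    intro h
    have hpos := hA.det_pos
    rw [hdA, h] at hpos
    simp at hpos
  have hRdetU : IsUnit R.det := isUnit_iff_ne_zero.mpr hRdet
  have hRH : Rᴴ = R := hRps.1
  have hRinvH : (R⁻¹)ᴴ = R⁻¹ := by rw [conjTranspose_nonsing_inv, hRH]
  have hRinvU : IsUnit R⁻¹ := (Matrix.isUnit_nonsing_inv_iff).mpr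
    ((Matrix.isUnit_iff_isUnit_det R).mpr hRdetU)
  set C := R⁻¹ * B * R⁻¹ with hCdef
  have hCpd : C.PosDef := by
    have := posDef_conj_aux hB hRinvU
    rwa [hRinvH] at this
  have hC := hCpd.isHermitian
  have e1 : R * R⁻¹ = 1 := Matrix.mul_nonsing_inv R hRdetU
  have e2 : R⁻¹ * R = 1 := Matrix.nonsing_inv_mul R hRdetU
  have hB' : R * C * R = B := by
    calc R * (R⁻¹ * B * R⁻¹) * R = R * R⁻¹ * B * (R⁻¹ * R) := by
          simp only [Matrix.mul_assoc]
      _ = B := by rw [e1, e2, Matrix.one_mul, Matrix.mul_one]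
  set lam := hC.eigenvalues with hlamdef
  set U : Matrix (Fin m) (Fin m) ℝ := (hC.eigenvectorUnitary : Matrix (Fin m) (Fin m) ℝ)
    with hUdef
  have hU : U * star U = 1 := mem_unitaryGroup_iff.mp hC.eigenvectorUnitary.2
  have hspec : C = U * Matrix.diagonal lam * star U := by
    have := hC.spectral_theorem
    simpa [RCLike.ofReal_real_eq_id] using this
  have hlampos : ∀ i, 0 < lam i := hCpd.eigenvalues_pos
  have hdetC : C.det = ∏ i, lam i := by
    have := hC.det_eq_prod_eigenvalues
    simpa using this
  -- case: all eigenvalues 1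
  by_cases hone : ∀ i, lam i = 1
  · exfalso
    have hdiag : Matrix.diagonal lam = 1 := by
      have : lam = fun _ => 1 := funext hone
      rw [this, Matrix.diagonal_one]
    have hC1 : C = 1 := by rw [hspec, hdiag, Matrix.mul_one, hU]
    have : B = A := by rw [← hB', hC1, Matrix.mul_one, hRR]
    exact hne this.symm
  push_neg at hone
  obtain ⟨i0, hi0⟩ := hone
  have hsum : (1 : Matrix (Fin m) (Fin m) ℝ) + C = U * (1 + Matrix.diagonal lam) * star U := by
    rw [Matrix.mul_add, Matrix.add_mul, Matrix.mul_one, hU, hspec]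
  have hdiag2 : ((1:ℝ)/2) • ((1 : Matrix (Fin m) (Fin m) ℝ) + Matrix.diagonal lam)
      = Matrix.diagonal (fun i => (1 + lam i)/2) := by
    ext i j
    rcases eq_or_ne i j with rfl | h
    · simp [Matrix.one_apply_eq, Matrix.diagonal_apply_eq]; ring
    · simp [Matrix.one_apply_ne h, Matrix.diagonal_apply_ne _ h]
  have havg : ((1:ℝ)/2) • ((1 : Matrix (Fin m) (Fin m) ℝ) + C)
      = U * Matrix.diagonal (fun i => (1 + lam i)/2) * star U := by
    rw [hsum, ← hdiag2]
    simp only [Matrix.mul_smul, Matrix.smul_mul]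
  have hUdet : U.det * (star U).det = 1 := by rw [← det_mul, hU, det_one]
  have hdetavg : (((1:ℝ)/2) • ((1 : Matrix (Fin m) (Fin m) ℝ) + C)).det
      = ∏ i, (1 + lam i)/2 := by
    rw [havg, det_mul, det_mul, det_diagonal]
    rw [mul_comm U.det _, mul_assoc, hUdet, mul_one]
  have hM : ((1:ℝ)/2) • (A + B) = R * (((1:ℝ)/2) • (1 + C)) * R := by
    have h3 : R * (1 + C) * R = A + B := by
      rw [Matrix.mul_add, Matrix.add_mul, Matrix.mul_one, hRR, hB']
    rw [← h3]
    simp only [Matrix.mul_smul, Matrix.smul_mul]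
  have hdB : B.det = R.det ^ 2 * ∏ i, lam i := by
    rw [← hB', det_mul, det_mul, hdetC]; ring
  have hdM : (((1:ℝ)/2) • (A + B)).det = R.det ^ 2 * ∏ i, (1 + lam i)/2 := by
    rw [hM, det_mul, det_mul, hdetavg]; ring
  have hprod : (∏ i, lam i) < ∏ i, ((1 + lam i)/2)^2 := by
    refine Finset.prod_lt_prod (fun i _ => hlampos i) (fun i _ => by nlinarith [sq_nonneg (1 - lam i)]) ⟨i0, Finset.mem_univ _, ?_⟩
    have h0 : (0:ℝ) < (1 - lam i0)^2 := by
      have : (1:ℝ) - lam i0 ≠ 0 := sub_ne_zero.mpr (Ne.symm hi0)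
      positivity
    nlinarith
  have hR4 : (0:ℝ) < (R.det ^ 2) ^ 2 := by positivity
  calc A.det * B.det = (R.det ^ 2) ^ 2 * ∏ i, lam i := by rw [hdA, hdB]; ring
    _ < (R.det ^ 2) ^ 2 * ∏ i, ((1 + lam i)/2)^2 := by
        exact (mul_lt_mul_iff_right₀ hR4).mpr hprod
    _ = (((1:ℝ)/2) • (A + B)).det ^ 2 := by
        rw [hdM, Finset.prod_pow]; ring

/-- Gaussian Kullback–Leibler divergence between `𝒩(0,S)` and `𝒩(0,T)`. -/
noncomputable def gaussKL {m : ℕ} (T S : Matrix (Fin m) (Fin m) ℝ) : ℝ :=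
  (1 / 2) * (-Real.log (S⁻¹ * T).det + Matrix.trace (S⁻¹ * T) - m)

/-- The problem of minimizing `2 D(T‖S)` over positive definite `T` subject to
`P_Ω(T - T̂) = 0` admits at most one solution. -/
theorem KL_min_unique {m : ℕ} (S That : Matrix (Fin m) (Fin m) ℝ)
    (hS : S.PosDef) (hThat : That.PosDef)
    (Ω : Set (Fin m × Fin m))
    (hΩsymm : ∀ i j, (i, j) ∈ Ω ↔ (j, i) ∈ Ω)
    (hΩdiag : ∀ i, (i, i) ∈ Ω)
    (T₁ T₂ : Matrix (Fin m) (Fin m) ℝ)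
    (h₁ : T₁.PosDef ∧ T₁.IsSymm ∧ (∀ i j, (i, j) ∈ Ω → T₁ i j = That i j) ∧
      ∀ T : Matrix (Fin m) (Fin m) ℝ, T.PosDef → T.IsSymm →
        (∀ i j, (i, j) ∈ Ω → T i j = That i j) → 2 * gaussKL T₁ S ≤ 2 * gaussKL T S)
    (h₂ : T₂.PosDef ∧ T₂.IsSymm ∧ (∀ i j, (i, j) ∈ Ω → T₂ i j = That i j) ∧
      ∀ T : Matrix (Fin m) (Fin m) ℝ, T.PosDef → T.IsSymm →
        (∀ i j, (i, j) ∈ Ω → T i j = That i j) → 2 * gaussKL T₂ S ≤ 2 * gaussKL T S) :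
    T₁ = T₂ := by
  obtain ⟨pd1, sym1, con1, min1⟩ := h₁
  obtain ⟨pd2, sym2, con2, min2⟩ := h₂
  by_contra hne
  have hSdet : (S⁻¹).det ≠ 0 := hS.inv.det_pos.ne'
  have key : ∀ T : Matrix (Fin m) (Fin m) ℝ, T.PosDef →
      2 * gaussKL T S
        = -Real.log (S⁻¹).det - Real.log T.det + Matrix.trace (S⁻¹ * T) - m := by
    intro T hT
    unfold gaussKL
    rw [det_mul, Real.log_mul hSdet hT.det_pos.ne']
    ring
  set M := ((1:ℝ)/2) • (T₁ + T₂) with hMdef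
  have hMpd : M.PosDef := posDef_smul_aux (pd1.add pd2) (by norm_num)
  have hMsym : M.IsSymm := by
    unfold Matrix.IsSymm
    rw [Matrix.transpose_smul, Matrix.transpose_add, sym1, sym2]
  have hMcon : ∀ i j, (i, j) ∈ Ω → M i j = That i j := by
    intro i j hij
    have e1 := con1 i j hij
    have e2 := con2 i j hij
    simp only [hMdef, Matrix.smul_apply, Matrix.add_apply, e1, e2, smul_eq_mul]
    ring
  have hle12 := min1 T₂ pd2 sym2 con2
  have hle21 := min2 T₁ pd1 sym1 con1
  have heq : 2 * gaussKL T₁ S = 2 * gaussKL T₂ S := le_antisymm hle12 hle21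
  have hleM := min1 M hMpd hMsym hMcon
  have htr : Matrix.trace (S⁻¹ * M)
      = (1/2) * (Matrix.trace (S⁻¹ * T₁) + Matrix.trace (S⁻¹ * T₂)) := by
    rw [hMdef, Matrix.mul_smul, Matrix.mul_add, Matrix.trace_smul, Matrix.trace_add]
    simp only [smul_eq_mul]
  have hdet : T₁.det * T₂.det < M.det ^ 2 := det_avg_sq_gt pd1 pd2 hne
  have hlog : (Real.log T₁.det + Real.log T₂.det) / 2 < Real.log M.det := by
    have h1 : Real.log (T₁.det * T₂.det) < Real.log (M.det ^ 2) :=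
      Real.log_lt_log (mul_pos pd1.det_pos pd2.det_pos) hdet
    rw [Real.log_mul pd1.det_pos.ne' pd2.det_pos.ne', Real.log_pow] at h1
    push_cast at h1
    linarith
  have hM2 := key M hMpd
  have h1' := key T₁ pd1
  have h2' := key T₂ pd2
  have heq' : -Real.log T₁.det + Matrix.trace (S⁻¹ * T₁)
      = -Real.log T₂.det + Matrix.trace (S⁻¹ * T₂) := by
    rw [h1', h2'] at heq
    linarith
  have hlt : 2 * gaussKL M S < 2 * gaussKL T₁ S := by
    rw [hM2, h1']
    linarith
  linarith
end

section
/- Weak duality: for every feasible T (symmetric positive definite with P_Ω(T − T̂) = 0) and every symmetric Λ supported on Ω with S⁻¹ + Λ ≻ 0, one has −log det T + tr(S⁻¹T) ≥ log det(S⁻¹+Λ) + m − tr(T̂Λ). -/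
open Matrix
open scoped MatrixOrder

lemma trace_eq_sum_eig {n : ℕ} {B : Matrix (Fin n) (Fin n) ℝ} (hB : B.IsHermitian) :
    B.trace = ∑ i, hB.eigenvalues i := by
  simpa using hB.trace_eq_sum_eigenvalues

lemma logdet_le_trace {n : ℕ} {B : Matrix (Fin n) (Fin n) ℝ} (hB : B.PosDef) :
    Real.log B.det ≤ B.trace - n := by
  have hev : ∀ i, 0 < hB.1.eigenvalues i := hB.eigenvalues_pos
  rw [hB.1.det_eq_prod_eigenvalues, trace_eq_sum_eig hB.1]
  simp only [RCLike.ofReal_real_eq_id, id_eq]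
  rw [Real.log_prod (fun i _ => (hev i).ne')]
  have : ∀ i ∈ Finset.univ, Real.log (hB.1.eigenvalues i) ≤ hB.1.eigenvalues i - 1 :=
    fun i _ => Real.log_le_sub_one_of_pos (hev i)
  calc ∑ i, Real.log (hB.1.eigenvalues i) ≤ ∑ i : Fin n, (hB.1.eigenvalues i - 1) :=
        Finset.sum_le_sum this
    _ = (∑ i, hB.1.eigenvalues i) - n := by rw [Finset.sum_sub_distrib]; simp

lemma key_ineq {n : ℕ} {A T : Matrix (Fin n) (Fin n) ℝ} (hA : A.PosDef) (hT : T.PosDef) :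
    Real.log A.det + Real.log T.det ≤ (A * T).trace - n := by
  set Q := CFC.sqrt T with hQ
  have hQH : Q.IsHermitian := (CFC.sqrt_nonneg T).posSemidef.1
  have hQQ : Q * Q = T := CFC.sqrt_mul_sqrt_self T hT.posSemidef.nonneg
  have hdetQ : Q.det * Q.det = T.det := by rw [← Matrix.det_mul, hQQ]
  have hdQ : Q.det ≠ 0 := by
    intro h; have := hT.det_pos; rw [← hdetQ, h, mul_zero] at this; exact lt_irrefl _ this
  have hQunit : IsUnit Q := by
    rw [Matrix.isUnit_iff_isUnit_det]; exact isUnit_iff_ne_zero.mpr hdQ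
  have hQT : Qᵀ = Q := hQH
  have hB : (Q * A * Q).PosDef := by
    refine Matrix.PosDef.of_dotProduct_mulVec_pos ?_ ?_
    · have := Matrix.isHermitian_conjTranspose_mul_mul Q hA.1
      rwa [hQH.eq] at this
    · intro x hx
      have hy : Q *ᵥ x ≠ 0 := by
        intro h
        exact hx ((Matrix.mulVec_injective_iff_isUnit.mpr hQunit) (by simp [h]))
      have := hA.dotProduct_mulVec_pos hy
      simp only [star_trivial] at this ⊢
      calc (0:ℝ) < (Q *ᵥ x) ⬝ᵥ A *ᵥ (Q *ᵥ x) := this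
        _ = x ⬝ᵥ (Q * A * Q) *ᵥ x := by
            conv_rhs => rw [← Matrix.mulVec_mulVec, ← Matrix.mulVec_mulVec, Matrix.dotProduct_mulVec, ← Matrix.mulVec_transpose, hQT]
  have hdetB : (Q * A * Q).det = A.det * T.det := by
    rw [Matrix.det_mul, Matrix.det_mul, ← hdetQ]; ring
  have htrB : (Q * A * Q).trace = (A * T).trace := by
    rw [Matrix.trace_mul_comm, ← mul_assoc, hQQ, Matrix.trace_mul_comm]
  have := logdet_le_trace hB
  rw [hdetB, htrB, Real.log_mul hA.det_pos.ne' hT.det_pos.ne'] at this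
  exact this

/-- Weak duality: for every feasible `T` and every dual-feasible `Λ`,
`-log det T + tr(S⁻¹ T) ≥ log det(S⁻¹+Λ) + m - tr(T̂ Λ)`. -/
theorem weak_duality {m : ℕ} (S That : Matrix (Fin m) (Fin m) ℝ)
    (hS : S.PosDef) (hThat : That.IsSymm)
    (Ω : Set (Fin m × Fin m)) (hΩsymm : ∀ i j, (i, j) ∈ Ω ↔ (j, i) ∈ Ω)
    (T Λ : Matrix (Fin m) (Fin m) ℝ)
    (hT : T.PosDef) (hTsymm : T.IsSymm)
    (hfeas : ∀ i j, (i, j) ∈ Ω → T i j = That i j)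
    (hΛ : Λ.IsSymm) (hΛsupp : ∀ i j, (i, j) ∉ Ω → Λ i j = 0)
    (hPD : (S⁻¹ + Λ).PosDef) :
    Real.log (S⁻¹ + Λ).det + m - Matrix.trace (That * Λ)
      ≤ -Real.log T.det + Matrix.trace (S⁻¹ * T) := by
  have h1 := key_ineq hPD hT
  have htr : ((S⁻¹ + Λ) * T).trace = (S⁻¹ * T).trace + (Λ * T).trace := by
    rw [Matrix.add_mul, Matrix.trace_add]
  have hΛT : (Λ * T).trace = (That * Λ).trace := by
    rw [Matrix.trace_mul_comm That Λ]
    unfold Matrix.trace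
    simp only [Matrix.diag, Matrix.mul_apply]
    refine Finset.sum_congr rfl fun i _ => Finset.sum_congr rfl fun j _ => ?_
    by_cases h : (i, j) ∈ Ω
    · have h2 : T j i = That j i := hfeas j i ((hΩsymm i j).mp h)
      rw [h2]
    · rw [hΛsupp i j h, zero_mul, zero_mul]
  rw [htr, hΛT] at h1
  linarith
end
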